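/- arXiv:1402.6163 — 3 statements merged into one kernel-verified Lean document; each statement's English description precedes it below -/
import Mathlib

section
/- For every real $y > 0$ and natural number $N \ge 1$, $\int_0^\infty t^{-(N+1)}\Big[e^{-yt} - \sum_{j=0}^{N-1} \frac{(-yt)^j}{j!} - \frac{(-yt)^N}{N!} e^{-t}\Big]\,dt = \frac{(-y)^N}{N!}\Big(\sum_{l=1}^{N} \frac{1}{l} - \log y\Big)$. -/
open Real Finset MeasureTheory Set intervalIntegral Filter

lemma ibp_step (n : ℕ) (x : ℝ) :
    ∫ s in (0:ℝ)..x, (x - s) ^ (n+1) * Real.exp (-s)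
      = x ^ (n+1) - (n+1) * ∫ s in (0:ℝ)..x, (x - s) ^ n * Real.exp (-s) := by
  have h := intervalIntegral.integral_mul_deriv_eq_deriv_mul
      (u := fun s : ℝ => (x - s) ^ (n+1)) (u' := fun s : ℝ => -((n+1) * (x - s) ^ n))
      (v := fun s : ℝ => -Real.exp (-s)) (v' := fun s : ℝ => Real.exp (-s))
      (a := 0) (b := x)
      (fun s _ => by
        have h1 : HasDerivAt (fun s : ℝ => x - s) (-1) s := by
          simpa using (hasDerivAt_id s).const_sub x
        have := h1.fun_pow (n+1)
        simpa [mul_comm, mul_assoc, mul_neg] using this)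
      (fun s _ => by
        have h1 : HasDerivAt (fun s : ℝ => -s) (-1) s := (hasDerivAt_id s).neg
        simpa [Function.comp_def, Pi.neg_def] using ((Real.hasDerivAt_exp (-s)).comp s h1).neg)
      (Continuous.intervalIntegrable (by continuity) _ _)
      (Continuous.intervalIntegrable (by continuity) _ _)
  have h3 : (∫ s in (0:ℝ)..x, -(((n:ℝ)+1) * (x - s) ^ n) * -Real.exp (-s))
      = (n+1) * ∫ s in (0:ℝ)..x, (x - s) ^ n * Real.exp (-s) := by
    rw [← intervalIntegral.integral_const_mul]
    apply intervalIntegral.integral_congr; intro s _; dsimp; ring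
  rw [h, h3]
  simp

lemma taylor_exp (n : ℕ) (x : ℝ) :
    Real.exp (-x) - ∑ j ∈ Finset.range (n+1), (-x) ^ j / (Nat.factorial j : ℝ)
      = (-1) ^ (n+1) / (Nat.factorial n : ℝ)
          * ∫ s in (0:ℝ)..x, (x - s) ^ n * Real.exp (-s) := by
  induction n with
  | zero =>
      have h : (∫ s in (0:ℝ)..x, (x - s) ^ 0 * Real.exp (-s)) = 1 - Real.exp (-x) := by
        simp only [pow_zero, one_mul]
        rw [intervalIntegral.integral_comp_neg (fun s => Real.exp s)]
        simp [integral_exp]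
      rw [h]; simp
  | succ n ih =>
      have hfac : (Nat.factorial (n+1) : ℝ) = ((n:ℝ)+1) * Nat.factorial n := by
        push_cast [Nat.factorial_succ]; ring
      have hne : (Nat.factorial n : ℝ) ≠ 0 := Nat.cast_ne_zero.mpr (Nat.factorial_ne_zero n)
      have hne1 : ((n:ℝ)+1) ≠ 0 := by positivity
      rw [Finset.sum_range_succ, ibp_step n x, sub_add_eq_sub_sub, ih]
      have hx : (-x) ^ (n+1) = (-1)^(n+1) * x^(n+1) := by rw [neg_pow]
      rw [hfac, hx]
      field_simp
      ring

lemma integrableOn_log_Ioc {b : ℝ} (hb : 0 < b) : IntegrableOn Real.log (Set.Ioc 0 b) := by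
  have hg : IntegrableOn (fun s : ℝ => 2 * s ^ (-(1:ℝ)/2) + b) (Set.Ioc 0 b) := by
    apply Integrable.add
    · exact (intervalIntegral.intervalIntegrable_rpow' (r := -(1:ℝ)/2)
        (by norm_num) (a := 0) (b := b)).1.const_mul 2
    · exact (integrableOn_const_iff (hC := by finiteness)).mpr (Or.inr (by simp [hb.le]))
  refine Integrable.mono' hg Real.measurable_log.aestronglyMeasurable ?_
  filter_upwards [ae_restrict_mem measurableSet_Ioc] with s hs
  obtain ⟨hs0, hsb⟩ := hs
  rcases le_or_gt s 1 with h1 | h1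
  · have hlog : -Real.log s = 2 * Real.log (s ^ (-(1:ℝ)/2)) := by
      rw [Real.log_rpow hs0]; ring
    have hpos : (0:ℝ) < s ^ (-(1:ℝ)/2) := Real.rpow_pos_of_pos hs0 _
    have h2 : Real.log (s ^ (-(1:ℝ)/2)) ≤ s ^ (-(1:ℝ)/2) - 1 :=
      Real.log_le_sub_one_of_pos hpos
    have h3 : ‖Real.log s‖ = -Real.log s := by
      rw [Real.norm_eq_abs, abs_of_nonpos (Real.log_nonpos hs0.le h1)]
    rw [h3, hlog]
    nlinarith [hpos, hb.le]
  · have h3 : ‖Real.log s‖ = Real.log s := by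
      rw [Real.norm_eq_abs, abs_of_nonneg (Real.log_nonneg h1.le)]
    have h4 : Real.log s ≤ s - 1 := Real.log_le_sub_one_of_pos (by linarith)
    have h5 : (0:ℝ) ≤ 2 * s ^ (-(1:ℝ)/2) := by positivity
    rw [h3]; nlinarith

lemma intervalIntegrable_pow_mul_log {y : ℝ} (hy : 0 < y) (n : ℕ) :
    IntervalIntegrable (fun s => (y - s) ^ n * Real.log s) volume 0 y := by
  rw [intervalIntegrable_iff, Set.uIoc_of_le hy.le]
  refine Integrable.mono' ((integrableOn_log_Ioc hy).norm.const_mul (y ^ n))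
    ?_ ?_
  · exact (((continuous_const.sub continuous_id).pow n).measurable.mul
      Real.measurable_log).aestronglyMeasurable
  · filter_upwards [ae_restrict_mem measurableSet_Ioc] with s hs
    obtain ⟨hs0, hsy⟩ := hs
    rw [norm_mul]
    gcongr
    rw [norm_pow, Real.norm_eq_abs, abs_of_nonneg (by linarith)]
    gcongr <;> linarith

lemma log_moment (n : ℕ) {y : ℝ} (hy : 0 < y) :
    ∫ s in (0:ℝ)..y, (y - s) ^ n * Real.log s
      = y ^ (n+1) / (n+1) * (Real.log y - ∑ l ∈ Finset.Icc 1 (n+1), (1:ℝ)/l) := by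
  set N := n + 1 with hNdef
  have hN1 : ((n:ℝ)+1) ≠ 0 := by positivity
  -- geometric identity
  have hgeom : ∀ s : ℝ, s * (∑ k ∈ Finset.range N, (y-s)^k * y^(n-k))
      = y ^ N - (y-s) ^ N := by
    intro s
    have h := geom_sum₂_mul (y - s) y N
    have h2 : ∀ k ∈ Finset.range N, (y-s)^k * y^(N-1-k) = (y-s)^k * y^(n-k) := by
      intro k hk
      have hnk : N - 1 - k = n - k := by omega
      rw [hnk]
    rw [Finset.sum_congr rfl h2] at h
    have h3 : (y - s) - y = -s := by ring
    rw [h3] at h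
    linarith [h]
  set B : ℝ → ℝ := fun s =>
    ∑ k ∈ Finset.range N, y^(n-k) * (y^(k+1) - (y-s)^(k+1)) / (((k:ℝ)+1) * ((n:ℝ)+1)) with hBdef
  set F : ℝ → ℝ := fun s =>
    (y ^ N - (y-s) ^ N) / ((n:ℝ)+1) * Real.log s - B s with hFdef
  -- derivative
  have hderiv : ∀ s ∈ Set.Ioo (0:ℝ) y, HasDerivAt F ((y - s) ^ n * Real.log s) s := by
    intro s hs
    have hs0 : s ≠ 0 := ne_of_gt hs.1
    have hys : HasDerivAt (fun s : ℝ => y - s) (-1) s := by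
      simpa using (hasDerivAt_id s).const_sub y
    have hA : HasDerivAt (fun s => (y ^ N - (y-s) ^ N) / ((n:ℝ)+1))
        ((y - s) ^ n) s := by
      have h1 : HasDerivAt (fun s : ℝ => (y-s)^N) (-((n+1) * (y-s)^n)) s := by
        have := hys.fun_pow N
        simpa [hNdef, mul_comm, mul_assoc, mul_neg] using this
      have h2 := ((hasDerivAt_const s (y^N)).sub h1).div_const ((n:ℝ)+1)
      refine h2.congr_deriv ?_
      field_simp
      ring
    have hlog : HasDerivAt Real.log s⁻¹ s := Real.hasDerivAt_log hs0
    have hAL := hA.mul hlog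
    have hB : HasDerivAt B (∑ k ∈ Finset.range N, y^(n-k) * (y-s)^k / ((n:ℝ)+1)) s := by
      apply HasDerivAt.fun_sum
      intro k hk
      have hk1 : ((k:ℝ)+1) ≠ 0 := by positivity
      have h1 : HasDerivAt (fun s : ℝ => (y-s)^(k+1)) (-((k+1) * (y-s)^k)) s := by
        have := hys.fun_pow (k+1)
        simpa [mul_comm, mul_assoc, mul_neg] using this
      have h2 := (((hasDerivAt_const s (y^(k+1))).sub h1).const_mul (y^(n-k))).div_const
        (((k:ℝ)+1) * ((n:ℝ)+1))
      refine h2.congr_deriv ?_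
      field_simp
      ring
    have := hAL.sub hB
    refine this.congr_deriv ?_
    have hg := hgeom s
    have hsum : (∑ k ∈ Finset.range N, y^(n-k) * (y-s)^k / ((n:ℝ)+1))
        = (∑ k ∈ Finset.range N, (y-s)^k * y^(n-k)) / ((n:ℝ)+1) := by
      rw [Finset.sum_div]
      exact Finset.sum_congr rfl fun k _ => by ring
    rw [hsum, ← hg]
    field_simp
    ring
  -- continuity
  have hcont : ContinuousOn F (Set.Icc 0 y) := by
    have hFeq : F = fun s => (∑ k ∈ Finset.range N, (y-s)^k * y^(n-k)) / ((n:ℝ)+1)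
        * (s * Real.log s) - B s := by
      funext s
      simp only [hFdef]
      rw [← hgeom s]
      ring
    rw [hFeq]
    apply ContinuousOn.sub
    · apply ContinuousOn.mul
      · exact (continuousOn_finset_sum _ fun k _ =>
          (((continuous_const.sub continuous_id).pow k).continuousOn.mul
            continuousOn_const)).div_const _
      · exact Real.continuous_mul_log.continuousOn
    · apply continuousOn_finset_sum
      intro k _
      exact ((continuousOn_const.mul ((continuousOn_const.sub
        ((continuous_const.sub continuous_id).pow (k+1)).continuousOn)))).div_const _
  have key := intervalIntegral.integral_eq_sub_of_hasDeriv_right_of_le hy.le hcont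
    (fun s hs => (hderiv s hs).hasDerivWithinAt)
    (intervalIntegrable_pow_mul_log hy n)
  rw [key]
  -- evaluate F y - F 0
  have hF0 : F 0 = 0 := by simp [hFdef, hBdef]
  have hFy : F y = y ^ N / ((n:ℝ)+1) * Real.log y
      - y ^ N / ((n:ℝ)+1) * ∑ l ∈ Finset.Icc 1 N, (1:ℝ)/l := by
    have hBy : B y = y ^ N / ((n:ℝ)+1) * ∑ l ∈ Finset.Icc 1 N, (1:ℝ)/l := by
      have h1 : ∀ k ∈ Finset.range N, y^(n-k) * (y^(k+1) - (y-y)^(k+1)) / (((k:ℝ)+1) * ((n:ℝ)+1))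
          = y ^ N / ((n:ℝ)+1) * (1 / ((k:ℝ)+1)) := by
        intro k hk
        rw [Finset.mem_range] at hk
        have hyk : y^(n-k) * y^(k+1) = y ^ N := by
          rw [← pow_add]; congr 1; omega
        rw [sub_self, zero_pow (by omega), sub_zero, mul_comm ((k:ℝ)+1), ← div_div, hyk]
        ring
      have h2 : ∑ l ∈ Finset.Icc 1 N, (1:ℝ)/l = ∑ k ∈ Finset.range N, (1:ℝ)/((k:ℝ)+1) := by
        rw [← Finset.Ico_add_one_right_eq_Icc, Finset.sum_Ico_eq_sum_range]
        apply Finset.sum_congr (by norm_num)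
        intro k _
        push_cast
        rw [add_comm]
      rw [hBdef]
      simp only []
      rw [Finset.sum_congr rfl h1, ← Finset.mul_sum, h2]
    simp only [hFdef]
    rw [hBy, sub_self, zero_pow (by omega), sub_zero]
  rw [hFy, hF0, sub_zero]
  ring

lemma exp_Lip {a b : ℝ} (ha : 0 ≤ a) (hb : 0 ≤ b) :
    |Real.exp (-a) - Real.exp (-b)| ≤ |a - b| := by
  wlog hab : a ≤ b generalizing a b
  · rw [abs_sub_comm, abs_sub_comm a b]; exact this hb ha (by linarith)
  have h1 : Real.exp (-b) ≤ Real.exp (-a) := Real.exp_le_exp.mpr (by linarith)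
  rw [abs_of_nonneg (by linarith), abs_of_nonpos (by linarith)]
  have h2 : Real.exp (-a) ≤ 1 := Real.exp_le_one_iff.mpr (by linarith)
  have h3 : Real.exp (-b) = Real.exp (-a) * Real.exp (-(b-a)) := by
    rw [← Real.exp_add]; ring_nf
  have h4 : 1 - (b - a) ≤ Real.exp (-(b-a)) := by
    have := Real.add_one_le_exp (-(b-a)); linarith
  nlinarith [Real.exp_pos (-a), Real.exp_pos (-(b-a))]

lemma frullani_bound {s t : ℝ} (hs : 0 ≤ s) (ht : 0 < t) :
    ‖(Real.exp (-(s*t)) - Real.exp (-t)) / t‖ ≤ |s - 1| := by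
  rw [norm_div, Real.norm_eq_abs, Real.norm_eq_abs, abs_of_pos ht, div_le_iff₀ ht]
  calc |Real.exp (-(s*t)) - Real.exp (-t)| ≤ |s*t - t| :=
        exp_Lip (by positivity) ht.le
    _ = |s - 1| * t := by rw [show s*t - t = (s-1)*t by ring, abs_mul, abs_of_pos ht]

lemma exp_div_integrableOn {b c : ℝ} (hb : 0 < b) (hc : 0 < c) :
    IntegrableOn (fun t => Real.exp (-(b*t)) / t) (Set.Ioi c) := by
  refine Integrable.mono' ((exp_neg_integrableOn_Ioi c hb).const_mul c⁻¹) ?_ ?_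
  · exact ((Real.continuous_exp.comp (continuous_const.mul continuous_id).neg).measurable.div
      measurable_id).aestronglyMeasurable
  · filter_upwards [ae_restrict_mem measurableSet_Ioi] with t ht
    have ht0 : (0:ℝ) < t := lt_trans hc ht
    rw [norm_div, Real.norm_eq_abs, Real.norm_eq_abs, abs_of_pos ht0, Real.abs_exp,
      div_le_iff₀ ht0, show -(b*t) = -b*t by ring]
    calc Real.exp (-b*t) = c⁻¹ * Real.exp (-b*t) * c := by field_simp
      _ ≤ c⁻¹ * Real.exp (-b*t) * t := by
          have h : (0:ℝ) < c⁻¹ * Real.exp (-b*t) := by positivity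
          nlinarith [le_of_lt (Set.mem_Ioi.mp ht)]

lemma frullani_integrableOn {s : ℝ} (hs : 0 < s) :
    IntegrableOn (fun t => (Real.exp (-(s*t)) - Real.exp (-t)) / t) (Set.Ioi 0) := by
  have hmeas : Measurable (fun t : ℝ => (Real.exp (-(s*t)) - Real.exp (-t)) / t) :=
    ((Real.continuous_exp.comp (continuous_const.mul continuous_id).neg).sub
      (Real.continuous_exp.comp continuous_neg)).measurable.div measurable_id
  have hunion : Set.Ioc (0:ℝ) 1 ∪ Set.Ioi (1:ℝ) = Set.Ioi 0 :=
    Set.Ioc_union_Ioi_eq_Ioi zero_le_one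
  rw [← hunion]
  apply IntegrableOn.union
  · have hconst : IntegrableOn (fun _ : ℝ => |s - 1|) (Set.Ioc (0:ℝ) 1) volume :=
      (integrableOn_const_iff (hC := by finiteness)).mpr (Or.inr measure_Ioc_lt_top)
    refine Integrable.mono' hconst hmeas.aestronglyMeasurable ?_
    filter_upwards [ae_restrict_mem measurableSet_Ioc] with t ht
    exact frullani_bound hs.le ht.1
  · refine Integrable.mono' (((exp_neg_integrableOn_Ioi 1 hs).add
      (exp_neg_integrableOn_Ioi 1 one_pos))) hmeas.aestronglyMeasurable ?_
    filter_upwards [ae_restrict_mem measurableSet_Ioi] with t ht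
    have ht0 : (0:ℝ) < t := lt_trans one_pos ht
    simp only [Pi.add_apply]
    rw [norm_div, Real.norm_eq_abs, Real.norm_eq_abs, abs_of_pos ht0]
    have h1 : |Real.exp (-(s*t)) - Real.exp (-t)| ≤ Real.exp (-s*t) + Real.exp (-1*t) := by
      calc |Real.exp (-(s*t)) - Real.exp (-t)| ≤ |Real.exp (-(s*t))| + |Real.exp (-t)| :=
            abs_sub _ _
        _ = Real.exp (-s*t) + Real.exp (-1*t) := by
            rw [Real.abs_exp, Real.abs_exp]; ring_nf
    rw [div_le_iff₀ ht0]
    have h2 : (0:ℝ) ≤ Real.exp (-s*t) + Real.exp (-1*t) := by positivity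
    nlinarith [le_of_lt (Set.mem_Ioi.mp ht)]

lemma integral_Ioi_split {g : ℝ → ℝ} {a b : ℝ} (hab : a ≤ b) (hg : IntegrableOn g (Set.Ioi a)) :
    ∫ t in Set.Ioi a, g t = (∫ t in a..b, g t) + ∫ t in Set.Ioi b, g t := by
  rw [intervalIntegral.integral_of_le hab, ← setIntegral_union
    (Set.Ioc_disjoint_Ioi le_rfl) measurableSet_Ioi
    (hg.mono_set Set.Ioc_subset_Ioi_self) (hg.mono_set (Set.Ioi_subset_Ioi hab)),
    Set.Ioc_union_Ioi_eq_Ioi hab]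

lemma integral_Ioi_diff {g : ℝ → ℝ} {a b : ℝ} (ha : 0 < a) (hb : 0 < b)
    (hg : IntegrableOn g (Set.Ioi (min a b))) :
    (∫ t in Set.Ioi a, g t) - ∫ t in Set.Ioi b, g t = ∫ t in a..b, g t := by
  rcases le_total a b with h | h
  · rw [integral_Ioi_split h (by simpa [min_eq_left h] using hg)]; ring
  · rw [integral_Ioi_split h (by simpa [min_eq_right h] using hg),
      intervalIntegral.integral_symm]
    ring

lemma frullani_sub {s ε : ℝ} (hs : 0 < s) (hε : 0 < ε) :
    ∫ t in Set.Ioi ε, Real.exp (-(s*t)) / t = ∫ u in Set.Ioi (s*ε), Real.exp (-u) / u := by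
  have h := integral_comp_mul_left_Ioi (fun u => Real.exp (-u) / u) ε hs
  have h2 : ∀ t ∈ Set.Ioi ε, Real.exp (-(s*t)) / t = s * (Real.exp (-(s*t)) / (s*t)) := by
    intro t ht
    have ht0 : t ≠ 0 := ne_of_gt (lt_trans hε ht)
    field_simp
  rw [setIntegral_congr_fun measurableSet_Ioi h2, MeasureTheory.integral_const_mul, h, smul_eq_mul,
    ← mul_assoc, mul_inv_cancel₀ (ne_of_gt hs), one_mul]

lemma frullani {s : ℝ} (hs : 0 < s) :
    ∫ t in Set.Ioi 0, (Real.exp (-(s*t)) - Real.exp (-t)) / t = -Real.log s := by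
  set F : ℝ → ℝ := fun t => (Real.exp (-(s*t)) - Real.exp (-t)) / t with hF
  have hFmeas : Measurable F :=
    ((Real.continuous_exp.comp (continuous_const.mul continuous_id).neg).sub
      (Real.continuous_exp.comp continuous_neg)).measurable.div measurable_id
  have hFi := frullani_integrableOn hs
  have key : ∀ ε : ℝ, 0 < ε →
      (∫ t in Set.Ioi 0, F t) = (∫ t in Set.Ioc 0 ε, F t) + (-Real.log s)
        + ∫ u in s*ε..ε, (Real.exp (-u) - 1) / u := by
    intro ε hε
    have hsε : 0 < s * ε := by positivity
    have hmin : (0:ℝ) < min (s*ε) ε := lt_min hsε hε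
    have h1 : (∫ t in Set.Ioi 0, F t) = (∫ t in Set.Ioc 0 ε, F t) + ∫ t in Set.Ioi ε, F t := by
      rw [integral_Ioi_split hε.le hFi, intervalIntegral.integral_of_le hε.le]
    have h2 : (∫ t in Set.Ioi ε, F t)
        = (∫ t in Set.Ioi ε, Real.exp (-(s*t)) / t) - ∫ t in Set.Ioi ε, Real.exp (-t) / t := by
      rw [← integral_sub (exp_div_integrableOn hs hε)
        (by simpa [IntegrableOn] using exp_div_integrableOn one_pos hε)]
      apply setIntegral_congr_fun measurableSet_Ioi
      intro t _; simp [hF, sub_div]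
    have h3 : (∫ t in Set.Ioi ε, Real.exp (-t) / t) = ∫ u in Set.Ioi ε, Real.exp (-u) / u := rfl
    have h4 : (∫ t in Set.Ioi ε, F t) = ∫ u in (s*ε)..ε, Real.exp (-u) / u := by
      rw [h2, frullani_sub hs hε, h3]
      exact integral_Ioi_diff hsε hε
        ((exp_div_integrableOn one_pos hmin).congr_fun (by intro x _; simp) measurableSet_Ioi)
    have h5 : (∫ u in (s*ε)..ε, Real.exp (-u) / u)
        = (∫ u in (s*ε)..ε, 1 / u) + ∫ u in (s*ε)..ε, (Real.exp (-u) - 1) / u := by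
      have hsub : Set.uIcc (s*ε) ε ⊆ {x : ℝ | x ≠ 0} := by
        intro x hx
        have : min (s*ε) ε ≤ x := hx.1
        have : 0 < x := lt_of_lt_of_le hmin this
        exact ne_of_gt this
      have hi1 : IntervalIntegrable (fun u : ℝ => 1/u) volume (s*ε) ε := by
        apply ContinuousOn.intervalIntegrable
        exact ContinuousOn.div continuousOn_const continuousOn_id (fun x hx => hsub hx)
      have hi2 : IntervalIntegrable (fun u : ℝ => (Real.exp (-u) - 1)/u) volume (s*ε) ε := by
        apply ContinuousOn.intervalIntegrable
        exact ContinuousOn.div ((Real.continuous_exp.comp continuous_neg).continuousOn.sub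
          continuousOn_const) continuousOn_id (fun x hx => hsub hx)
      rw [← intervalIntegral.integral_add hi1 hi2]
      apply intervalIntegral.integral_congr
      intro u hu
      have hu0 : u ≠ 0 := hsub hu
      field_simp
      ring
    have h6 : (∫ u in (s*ε)..ε, (1:ℝ) / u) = -Real.log s := by
      have h0 : (0:ℝ) ∉ Set.uIcc (s*ε) ε := fun hx => absurd hx.1 (not_le.mpr hmin)
      rw [integral_one_div h0, show ε / (s*ε) = s⁻¹ by rw [mul_comm]; field_simp, Real.log_inv]
    rw [h1, h4, h5, h6]
    ring
  have T1 : Tendsto (fun ε => ∫ t in Set.Ioc (0:ℝ) ε, F t) (nhdsWithin 0 (Set.Ioi 0)) (nhds 0) := by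
    apply squeeze_zero_norm'
    · filter_upwards [self_mem_nhdsWithin] with ε hε
      have hε0 : (0:ℝ) < ε := hε
      calc ‖∫ t in Set.Ioc (0:ℝ) ε, F t‖
          ≤ |s-1| * (volume (Set.Ioc (0:ℝ) ε)).toReal := by
            refine norm_setIntegral_le_of_norm_le_const measure_Ioc_lt_top ?_
            · intro t ht
              exact frullani_bound hs.le ht.1
        _ = |s-1| * ε := by rw [Real.volume_Ioc]; simp [hε0.le]
    · have h : Tendsto (fun ε : ℝ => |s-1| * ε) (nhds 0) (nhds (|s-1| * 0)) :=
        tendsto_id.const_mul _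
      simpa using h.mono_left nhdsWithin_le_nhds
  have T2 : Tendsto (fun ε => ∫ u in s*ε..ε, (Real.exp (-u) - 1) / u)
      (nhdsWithin 0 (Set.Ioi 0)) (nhds 0) := by
    apply squeeze_zero_norm'
    · filter_upwards [self_mem_nhdsWithin] with ε hε
      have hε0 : (0:ℝ) < ε := hε
      have hmin : (0:ℝ) < min (s*ε) ε := lt_min (by positivity) hε0
      have hb : ∀ u ∈ Set.uIoc (s*ε) ε, ‖(Real.exp (-u) - 1) / u‖ ≤ 1 := by
        intro u hu
        have hu0 : (0:ℝ) < u := lt_of_le_of_lt hmin.le hu.1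
        rw [norm_div, Real.norm_eq_abs, Real.norm_eq_abs, abs_of_pos hu0, div_le_one hu0,
          abs_of_nonpos (by linarith [Real.exp_le_one_iff.mpr (neg_nonpos.mpr hu0.le)])]
        linarith [Real.add_one_le_exp (-u)]
      calc ‖∫ u in s*ε..ε, (Real.exp (-u) - 1) / u‖ ≤ 1 * |ε - s*ε| :=
            intervalIntegral.norm_integral_le_of_norm_le_const hb
        _ = |1-s| * ε := by
            rw [one_mul, show ε - s*ε = (1-s)*ε by ring, abs_mul, abs_of_pos hε0]
    · have h : Tendsto (fun ε : ℝ => |1-s| * ε) (nhds 0) (nhds (|1-s| * 0)) :=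
        tendsto_id.const_mul _
      simpa using h.mono_left nhdsWithin_le_nhds
  have Tall : Tendsto (fun ε => (∫ t in Set.Ioc (0:ℝ) ε, F t) + (-Real.log s)
      + ∫ u in s*ε..ε, (Real.exp (-u) - 1) / u) (nhdsWithin 0 (Set.Ioi 0))
      (nhds (0 + (-Real.log s) + 0)) :=
    (T1.add tendsto_const_nhds).add T2
  have heq : (fun ε => (∫ t in Set.Ioc (0:ℝ) ε, F t) + (-Real.log s)
      + ∫ u in s*ε..ε, (Real.exp (-u) - 1) / u)
      =ᶠ[nhdsWithin (0:ℝ) (Set.Ioi 0)] (fun _ => ∫ t in Set.Ioi (0:ℝ), F t) := by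
    filter_upwards [self_mem_nhdsWithin] with ε hε
    exact (key ε hε).symm
  have hlim := Tall.congr' heq
  have := tendsto_nhds_unique hlim tendsto_const_nhds
  simpa using this.symm

lemma integral_exp_neg01 (z : ℝ) : ∫ u in (0:ℝ)..z, Real.exp (-u) = 1 - Real.exp (-z) := by
  rw [intervalIntegral.integral_comp_neg (fun s => Real.exp s)]
  simp [integral_exp]

lemma scale (n : ℕ) {t : ℝ} (ht : 0 < t) (y : ℝ) :
    ∫ s in (0:ℝ)..(y*t), (y*t - s)^n * Real.exp (-s)
      = t^(n+1) * ∫ s in (0:ℝ)..y, (y - s)^n * Real.exp (-(s*t)) := by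
  have h := intervalIntegral.integral_comp_mul_left
    (f := fun s => (y*t - s)^n * Real.exp (-s)) (c := t) (a := (0:ℝ)) (b := y) (ne_of_gt ht)
  simp only [mul_zero] at h
  have h2 : Set.EqOn (fun x : ℝ => (y*t - t*x)^n * Real.exp (-(t*x)))
      (fun x : ℝ => t^n * ((y - x)^n * Real.exp (-(x*t)))) (Set.uIcc 0 y) := by
    intro x _
    simp only
    rw [show y*t - t*x = t*(y-x) by ring, mul_pow, show t*x = x*t by ring]
    ring
  rw [intervalIntegral.integral_congr h2, intervalIntegral.integral_const_mul] at h
  rw [show y*t = t*y by ring] at *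
  rw [smul_eq_mul] at h
  have ht' : t ≠ 0 := ne_of_gt ht
  field_simp at h
  rw [pow_succ]
  rw [mul_comm t y]; linarith [h]

lemma bracket_eq (y : ℝ) (n : ℕ) {t : ℝ} (ht : 0 < t) :
    (Real.exp (-(y * t)) - ∑ j ∈ Finset.range (n+1), (-(y * t)) ^ j / (Nat.factorial j : ℝ)
      - (-(y * t)) ^ (n+1) / (Nat.factorial (n+1) : ℝ) * Real.exp (-t)) / t ^ (n + 1 + 1)
    = ((-1)^(n+1) / (Nat.factorial n : ℝ)) *
        ((∫ s in (0:ℝ)..y, (y - s)^n * (Real.exp (-(s*t)) - Real.exp (-t))) / t) := by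
  have hT := taylor_exp n (y*t)
  rw [scale n ht y] at hT
  have hpow : (∫ s in (0:ℝ)..y, (y - s)^n) = y^(n+1)/(n+1) := by
    rw [intervalIntegral.integral_comp_sub_left (fun s => s^n) y]
    simp [integral_pow]
  have hsplit : (∫ s in (0:ℝ)..y, (y - s)^n * (Real.exp (-(s*t)) - Real.exp (-t)))
      = (∫ s in (0:ℝ)..y, (y - s)^n * Real.exp (-(s*t)))
        - Real.exp (-t) * (y^(n+1)/((n:ℝ)+1)) := by
    have hi1 : IntervalIntegrable (fun s : ℝ => (y - s)^n * Real.exp (-(s*t))) volume 0 y :=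
      (((continuous_const.sub continuous_id).pow n).mul
        (Real.continuous_exp.comp (continuous_id.mul continuous_const).neg)).intervalIntegrable _ _
    have hi2 : IntervalIntegrable (fun s : ℝ => (y - s)^n * Real.exp (-t)) volume 0 y :=
      (((continuous_const.sub continuous_id).pow n).mul continuous_const).intervalIntegrable _ _
    have : (∫ s in (0:ℝ)..y, (y - s)^n * (Real.exp (-(s*t)) - Real.exp (-t)))
        = (∫ s in (0:ℝ)..y, (y - s)^n * Real.exp (-(s*t)))
          - ∫ s in (0:ℝ)..y, (y - s)^n * Real.exp (-t) := by
      rw [← intervalIntegral.integral_sub hi1 hi2]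
      apply intervalIntegral.integral_congr
      intro s _; simp only; ring
    rw [this, intervalIntegral.integral_mul_const, hpow]
    push_cast
    try ring
  rw [hsplit]
  rw [sub_div, hT]
  have hfac : (Nat.factorial (n+1) : ℝ) = ((n:ℝ)+1) * Nat.factorial n := by
    push_cast [Nat.factorial_succ]; ring
  have hne : (Nat.factorial n : ℝ) ≠ 0 := Nat.cast_ne_zero.mpr (Nat.factorial_ne_zero n)
  have hyt : (-(y*t))^(n+1) = (-1)^(n+1) * (y^(n+1) * t^(n+1)) := by
    rw [neg_pow, mul_pow]; try ring
  rw [hfac, hyt]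
  have ht' : t ≠ 0 := ne_of_gt ht
  have hn1 : ((n:ℝ)+1) ≠ 0 := by positivity
  field_simp
  ring

lemma fubini_swap (y : ℝ) (hy : 0 < y) (n : ℕ) :
    ∫ t in Set.Ioi (0:ℝ),
        (∫ s in Set.Ioc (0:ℝ) y, (y - s)^n * ((Real.exp (-(s*t)) - Real.exp (-t)) / t))
      = ∫ s in Set.Ioc (0:ℝ) y, (y - s)^n * (-Real.log s) := by
  set g : ℝ → ℝ → ℝ := fun t s => (y - s)^n * ((Real.exp (-(s*t)) - Real.exp (-t)) / t)
    with hg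
  have hmeas : Measurable (Function.uncurry g) := by
    apply Measurable.mul
    · exact ((continuous_const.sub continuous_snd).pow n).measurable
    · apply Measurable.div
      · exact ((Real.continuous_exp.comp (continuous_snd.mul continuous_fst).neg).sub
          (Real.continuous_exp.comp continuous_fst.neg)).measurable
      · exact measurable_fst
  have hcont : ∀ t : ℝ, Continuous (fun s => g t s) := by
    intro t
    exact ((continuous_const.sub continuous_id).pow n).mul
      (((Real.continuous_exp.comp (continuous_id.mul continuous_const).neg).sub
        continuous_const).div_const t)
  have hmeasF : AEStronglyMeasurable
      (fun t => ∫ s in Set.Ioc (0:ℝ) y, ‖g t s‖)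
      (volume.restrict (Set.Ioi (0:ℝ))) :=
    (hmeas.norm.aestronglyMeasurable).integral_prod_right'
  have hunion : Set.Ioc (0:ℝ) 1 ∪ Set.Ioi (1:ℝ) = Set.Ioi 0 :=
    Set.Ioc_union_Ioi_eq_Ioi zero_le_one
  have hpart1 : IntegrableOn (fun t => ∫ s in Set.Ioc (0:ℝ) y, ‖g t s‖)
      (Set.Ioc (0:ℝ) 1) volume := by
    refine Integrable.mono'
      ((integrableOn_const_iff (hC := by finiteness)).mpr (Or.inr measure_Ioc_lt_top) :
        IntegrableOn (fun _ : ℝ => y^n * (1+y) * y) (Set.Ioc (0:ℝ) 1) volume)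
      (hmeasF.mono_set Set.Ioc_subset_Ioi_self) ?_
    filter_upwards [ae_restrict_mem measurableSet_Ioc] with t ht
    have hbound : ∀ s ∈ Set.Ioc (0:ℝ) y, ‖‖g t s‖‖ ≤ y^n * (1+y) := by
      intro s hs
      rw [norm_norm, hg, norm_mul]
      have h1 : ‖(y - s : ℝ)^n‖ ≤ y^n := by
        rw [norm_pow, Real.norm_eq_abs, abs_of_nonneg (by linarith [hs.2])]
        gcongr
        · linarith [hs.2]
        · linarith [hs.1]
      have h2 : ‖(Real.exp (-(s*t)) - Real.exp (-t)) / t‖ ≤ |s - 1| :=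
        frullani_bound hs.1.le ht.1
      have h3 : |s - 1| ≤ 1 + y := by
        rw [abs_sub_le_iff]; constructor <;> linarith [hs.1, hs.2]
      exact mul_le_mul h1 (h2.trans h3) (norm_nonneg _) (by positivity)
    calc ‖∫ s in Set.Ioc (0:ℝ) y, ‖g t s‖‖
        ≤ y^n * (1+y) * (volume (Set.Ioc (0:ℝ) y)).toReal := by
          exact norm_setIntegral_le_of_norm_le_const measure_Ioc_lt_top hbound
      _ = y^n * (1+y) * y := by rw [Real.volume_Ioc]; simp [hy.le]
  have hpart2 : IntegrableOn (fun t => ∫ s in Set.Ioc (0:ℝ) y, ‖g t s‖)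
      (Set.Ioi (1:ℝ)) volume := by
    refine Integrable.mono'
      (g := fun t : ℝ => y^n * (1/t^2) + y^(n+1) * Real.exp (-1*t)) ?_
      (hmeasF.mono_set (Set.Ioi_subset_Ioi zero_le_one)) ?_
    · apply Integrable.add
      · have h2 : IntegrableOn (fun t : ℝ => t ^ (-2 : ℝ)) (Set.Ioi (1:ℝ)) :=
          integrableOn_Ioi_rpow_of_lt (by norm_num) one_pos
        refine (h2.congr_fun (fun t ht => ?_) measurableSet_Ioi).const_mul (y^n)
        rw [Real.rpow_neg (by linarith [Set.mem_Ioi.mp ht]),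
          show (2:ℝ) = ((2:ℕ):ℝ) by norm_num, Real.rpow_natCast]
        norm_num
      · exact (exp_neg_integrableOn_Ioi 1 one_pos).const_mul _
    · filter_upwards [ae_restrict_mem measurableSet_Ioi] with t ht
      have ht0 : (0:ℝ) < t := lt_trans one_pos ht
      have ht1 : (1:ℝ) ≤ t := le_of_lt ht
      have hval : (∫ s in Set.Ioc (0:ℝ) y, Real.exp (-(s*t)))
          = (1 - Real.exp (-(y*t)))/t := by
        rw [← intervalIntegral.integral_of_le hy.le,
          intervalIntegral.integral_comp_mul_right (fun u => Real.exp (-u)) (ne_of_gt ht0)]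
        simp only [zero_mul, smul_eq_mul]
        rw [integral_exp_neg01]
        ring
      have hIle : (∫ s in Set.Ioc (0:ℝ) y, ‖g t s‖)
          ≤ ∫ s in Set.Ioc (0:ℝ) y, y^n * ((Real.exp (-(s*t)) + Real.exp (-t))/t) := by
        apply setIntegral_mono_on
        · exact ((hcont t).norm).integrableOn_Ioc
        · exact (continuous_const.mul (((Real.continuous_exp.comp
            (continuous_id.mul continuous_const).neg).add
            continuous_const).div_const t)).integrableOn_Ioc
        · exact measurableSet_Ioc
        · intro s hs
          rw [hg, norm_mul]
          have h1 : ‖(y - s : ℝ)^n‖ ≤ y^n := by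
            rw [norm_pow, Real.norm_eq_abs, abs_of_nonneg (by linarith [hs.2])]
            gcongr
            · linarith [hs.2]
            · linarith [hs.1]
          have h2 : ‖(Real.exp (-(s*t)) - Real.exp (-t)) / t‖
              ≤ (Real.exp (-(s*t)) + Real.exp (-t))/t := by
            rw [norm_div, Real.norm_eq_abs, Real.norm_eq_abs, abs_of_pos ht0]
            gcongr
            calc |Real.exp (-(s*t)) - Real.exp (-t)|
                ≤ |Real.exp (-(s*t))| + |Real.exp (-t)| := abs_sub _ _
              _ = Real.exp (-(s*t)) + Real.exp (-t) := by rw [Real.abs_exp, Real.abs_exp]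
          exact mul_le_mul h1 h2 (norm_nonneg _) (by positivity)
      have hval2 : (∫ s in Set.Ioc (0:ℝ) y, y^n * ((Real.exp (-(s*t)) + Real.exp (-t))/t))
          = y^n * (((1 - Real.exp (-(y*t)))/t + y * Real.exp (-t))/t) := by
        rw [MeasureTheory.integral_const_mul]
        congr 1
        have hstep : (∫ s in Set.Ioc (0:ℝ) y, (Real.exp (-(s*t)) + Real.exp (-t))/t)
            = (∫ s in Set.Ioc (0:ℝ) y, (Real.exp (-(s*t)) + Real.exp (-t)))/t := by
          simp_rw [div_eq_mul_inv]
          rw [MeasureTheory.integral_mul_const]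
        rw [hstep]
        congr 1
        rw [MeasureTheory.integral_add]
        · rw [hval, MeasureTheory.setIntegral_const, smul_eq_mul, Real.volume_real_Ioc]
          simp [hy.le]
        · exact (Real.continuous_exp.comp
            (continuous_id.mul continuous_const).neg).integrableOn_Ioc
        · exact continuous_const.integrableOn_Ioc
      have hnorm : ‖∫ s in Set.Ioc (0:ℝ) y, ‖g t s‖‖
          = ∫ s in Set.Ioc (0:ℝ) y, ‖g t s‖ := by
        rw [Real.norm_eq_abs, abs_of_nonneg]
        exact setIntegral_nonneg measurableSet_Ioc fun s _ => norm_nonneg _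
      rw [hnorm]
      refine hIle.trans ?_
      rw [hval2]
      have hE : (0:ℝ) < Real.exp (-(y*t)) := Real.exp_pos _
      have hF : (0:ℝ) < Real.exp (-t) := Real.exp_pos _
      have h1 : ((1 - Real.exp (-(y*t)))/t + y * Real.exp (-t))/t
          ≤ 1/t^2 + y * Real.exp (-t) := by
        rw [div_le_iff₀ ht0]
        have e1 : (1/t^2 + y * Real.exp (-t)) * t = (1/t) + y * Real.exp (-t) * t := by
          field_simp
        rw [e1]
        have h2 : (1 - Real.exp (-(y*t)))/t ≤ 1/t := by gcongr <;> linarith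
        have h3 : y * Real.exp (-t) ≤ y * Real.exp (-t) * t := by
          nlinarith [mul_pos hy hF]
        linarith
      calc y^n * (((1 - Real.exp (-(y*t)))/t + y * Real.exp (-t))/t)
          ≤ y^n * (1/t^2 + y * Real.exp (-t)) :=
            mul_le_mul_of_nonneg_left h1 (by positivity)
        _ = y^n * (1/t^2) + y^(n+1) * Real.exp (-1*t) := by
            rw [neg_one_mul]; ring
  have hint : Integrable (Function.uncurry g)
      ((volume.restrict (Set.Ioi (0:ℝ))).prod (volume.restrict (Set.Ioc (0:ℝ) y))) := by
    rw [MeasureTheory.integrable_prod_iff hmeas.aestronglyMeasurable]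
    refine ⟨Filter.Eventually.of_forall fun t => (hcont t).integrableOn_Ioc, ?_⟩
    exact hunion ▸ (integrableOn_union.mpr ⟨hpart1, hpart2⟩)
  have h2 : ∀ s ∈ Set.Ioc (0:ℝ) y,
      (∫ t in Set.Ioi (0:ℝ), g t s) = (y - s)^n * (-Real.log s) := by
    intro s hs
    simp only [hg]
    rw [MeasureTheory.integral_const_mul, frullani hs.1]
  calc (∫ t in Set.Ioi (0:ℝ), ∫ s in Set.Ioc (0:ℝ) y, g t s)
      = ∫ s in Set.Ioc (0:ℝ) y, ∫ t in Set.Ioi (0:ℝ), g t s :=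
        MeasureTheory.integral_integral_swap hint
    _ = _ := setIntegral_congr_fun measurableSet_Ioc h2


/-- Ruijsenaars' integral identity: for `y > 0` and `N ≥ 1`,
`∫_0^∞ t^{-(N+1)} [e^{-yt} - ∑_{j<N} (-yt)^j/j! - (-yt)^N/N! · e^{-t}] dt
  = (-y)^N/N! (H_N - log y)`. -/
theorem ruijsenaars_integral_identity (y : ℝ) (hy : 0 < y) (N : ℕ) (hN : 1 ≤ N) :
    ∫ t in Set.Ioi (0 : ℝ),
      (Real.exp (-(y * t)) - ∑ j ∈ Finset.range N, (-(y * t)) ^ j / (Nat.factorial j : ℝ)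
        - (-(y * t)) ^ N / (Nat.factorial N : ℝ) * Real.exp (-t)) / t ^ (N + 1) =
    (-y) ^ N / (Nat.factorial N : ℝ) *
      ((∑ l ∈ Finset.Icc 1 N, (1 : ℝ) / l) - Real.log y) := by
  obtain ⟨n, rfl⟩ : ∃ n, N = n + 1 := ⟨N - 1, by omega⟩
  have step1 : (∫ t in Set.Ioi (0 : ℝ),
      (Real.exp (-(y * t)) - ∑ j ∈ Finset.range (n+1), (-(y * t)) ^ j / (Nat.factorial j : ℝ)
        - (-(y * t)) ^ (n+1) / (Nat.factorial (n+1) : ℝ) * Real.exp (-t)) / t ^ (n + 1 + 1))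
      = ∫ t in Set.Ioi (0:ℝ), ((-1)^(n+1) / (Nat.factorial n : ℝ)) *
          (∫ s in Set.Ioc (0:ℝ) y, (y - s)^n * ((Real.exp (-(s*t)) - Real.exp (-t)) / t)) := by
    apply setIntegral_congr_fun measurableSet_Ioi
    intro t ht
    dsimp only
    rw [bracket_eq y n ht]
    congr 1
    rw [intervalIntegral.integral_of_le hy.le, ← MeasureTheory.integral_div]
    apply setIntegral_congr_fun measurableSet_Ioc
    intro s _
    dsimp only
    rw [mul_div_assoc]
  rw [step1, MeasureTheory.integral_const_mul, fubini_swap y hy n]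
  have step2 : (∫ s in Set.Ioc (0:ℝ) y, (y - s)^n * (-Real.log s))
      = -(y ^ (n+1) / ((n:ℝ)+1) * (Real.log y - ∑ l ∈ Finset.Icc 1 (n+1), (1:ℝ)/l)) := by
    rw [show (fun s => (y - s)^n * (-Real.log s)) = (fun s => -((y - s)^n * Real.log s))
      by funext s; ring]
    rw [MeasureTheory.integral_neg, ← intervalIntegral.integral_of_le hy.le,
      log_moment n hy]
    try push_cast
    try ring_nf
  rw [step2]
  have hfac : (Nat.factorial (n+1) : ℝ) = ((n:ℝ)+1) * Nat.factorial n := by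
    push_cast [Nat.factorial_succ]; ring
  have hne : (Nat.factorial n : ℝ) ≠ 0 := Nat.cast_ne_zero.mpr (Nat.factorial_ne_zero n)
  have hy1 : (-y)^(n+1) = (-1)^(n+1) * y^(n+1) := by rw [neg_pow]
  have hn1 : ((n:ℝ)+1) ≠ 0 := by positivity
  rw [hfac, hy1]
  field_simp
  ring
end

section
/- Let $f(t)$ be given by a power series $f(t) = \sum_{m\ge 0} c_m t^m/m!$ convergent near $0$, and for $x$ real define $B_m(x) = \frac{d^m}{dt^m}\big|_{t=0}[f(t)e^{-xt}]$. Then for any integer $k \ge 1$ and reals $w, a_1, \ldots, a_M$, with $f_a(t) = t^M \prod_{j=1}^M (1-e^{-a_j t})^{-1}$ (extended analytically at $0$) and $B_{M,m}(x\mid a)$ its associated Bernoulli functions, one has $\sum_{p_1,\ldots,p_M = 0}^{k-1} B_{M,m}\Big(w + \frac{\sum_{j=1}^M p_j a_j}{k} \,\Big|\, a\Big) = k^{M-m}\, B_{M,m}(kw \mid a)$. -/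
open Finset Filter


private lemma myAnalyticAt_deriv {f : ℝ → ℝ} {x : ℝ} (h : AnalyticAt ℝ f x) :
    AnalyticAt ℝ (deriv f) x := by
  obtain ⟨U, hUsub, hUo, hxU⟩ := mem_nhds_iff.mp h.eventually_analyticAt
  exact (AnalyticOnNhd.deriv (fun y hy => hUsub hy)) x hxU

private lemma myIter_cmul (c : ℝ) : ∀ (n : ℕ) (ψ : ℝ → ℝ), AnalyticAt ℝ ψ 0 →
    iteratedDeriv n (fun t => c * ψ t) 0 = c * iteratedDeriv n ψ 0
  | 0, ψ, _ => by simp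
  | n+1, ψ, hψ => by
    rw [iteratedDeriv_succ', iteratedDeriv_succ']
    have h1 : deriv (fun t => c * ψ t) =ᶠ[nhds (0:ℝ)] fun t => c * deriv ψ t := by
      filter_upwards [hψ.eventually_analyticAt] with t ht
      exact deriv_const_mul c ht.differentiableAt
    rw [Filter.EventuallyEq.iteratedDeriv_eq n h1]
    exact myIter_cmul c n (deriv ψ) (myAnalyticAt_deriv hψ)

private lemma myIter_sum {ι : Type*} (s : Finset ι) : ∀ (n : ℕ) (F : ι → ℝ → ℝ),
    (∀ i ∈ s, AnalyticAt ℝ (F i) 0) →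
    iteratedDeriv n (fun t => ∑ i ∈ s, F i t) 0 = ∑ i ∈ s, iteratedDeriv n (F i) 0
  | 0, F, _ => by simp
  | n+1, F, hF => by
    rw [iteratedDeriv_succ']
    have h1 : deriv (fun t => ∑ i ∈ s, F i t) =ᶠ[nhds (0:ℝ)] fun t => ∑ i ∈ s, deriv (F i) t := by
      have h2 : ∀ᶠ t in nhds (0:ℝ), ∀ i ∈ s, AnalyticAt ℝ (F i) t :=
        (Filter.eventually_all_finset s).mpr fun i hi => (hF i hi).eventually_analyticAt
      filter_upwards [h2] with t ht
      exact deriv_fun_sum fun i hi => (ht i hi).differentiableAt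
    rw [Filter.EventuallyEq.iteratedDeriv_eq n h1,
      myIter_sum s n (fun i => deriv (F i)) (fun i hi => myAnalyticAt_deriv (hF i hi))]
    exact Finset.sum_congr rfl fun i _ => (iteratedDeriv_succ' (n := n) (f := F i) ▸ rfl)

private lemma myIter_scale (c : ℝ) (hc : c ≠ 0) : ∀ (n : ℕ) (ψ : ℝ → ℝ), AnalyticAt ℝ ψ 0 →
    iteratedDeriv n (fun t => ψ (c * t)) 0 = c ^ n * iteratedDeriv n ψ 0
  | 0, ψ, _ => by simp
  | n+1, ψ, hψ => by
    rw [iteratedDeriv_succ', iteratedDeriv_succ']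
    have hlin : Filter.Tendsto (fun t : ℝ => c * t) (nhds 0) (nhds 0) := by
      have := (continuous_mul_left c).tendsto (0:ℝ); rwa [mul_zero] at this
    have h1 : deriv (fun t => ψ (c * t)) =ᶠ[nhds (0:ℝ)] fun t => c * deriv ψ (c * t) := by
      filter_upwards [hlin.eventually hψ.eventually_analyticAt] with t ht
      have h3 : deriv (ψ ∘ fun t => c * t) t = deriv ψ (c * t) * deriv (fun t => c * t) t :=
        deriv_comp t ht.differentiableAt ((differentiableAt_id.const_mul c))
      have h4 : deriv (fun t : ℝ => c * t) t = c := by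
        simpa using deriv_const_mul c (differentiableAt_id (x := t))
      rw [h4] at h3
      simpa [Function.comp_def, mul_comm] using h3
    have hcomp : AnalyticAt ℝ (fun t => deriv ψ (c * t)) 0 := by
      have hd : AnalyticAt ℝ (deriv ψ) ((fun t : ℝ => c * t) 0) := by
        simpa using (myAnalyticAt_deriv hψ)
      have := hd.comp (analyticAt_const.mul analyticAt_id)
      simpa [Function.comp_def] using this
    rw [Filter.EventuallyEq.iteratedDeriv_eq n h1,
      myIter_cmul c n _ hcomp,
      myIter_scale c hc n (deriv ψ) (myAnalyticAt_deriv hψ)]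
    ring

/-- Multiplication (distribution) relation for the multiple Bernoulli polynomials
`B_{M,m}(x|a)`, defined as `d^m/dt^m |_{t=0} [g(t) e^{-xt}]` where `g` is the analytic
extension at `0` of `f_a(t) = t^M ∏_j (1-e^{-a_j t})^{-1}`. -/
theorem multiple_bernoulli_multiplication (M : ℕ) (a : Fin M → ℝ) (ha : ∀ j, 0 < a j)
    (g : ℝ → ℝ) (hg : AnalyticAt ℝ g 0)
    (hgeq : g =ᶠ[nhdsWithin 0 {(0 : ℝ)}ᶜ] fun t =>
      t ^ M * ∏ j, (1 - Real.exp (-(a j * t)))⁻¹)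
    (B : ℕ → ℝ → ℝ)
    (hB : ∀ m x, B m x = iteratedDeriv m (fun t => g t * Real.exp (-(x * t))) 0)
    (k : ℕ) (hk : 1 ≤ k) (m : ℕ) (w : ℝ) :
    ∑ p ∈ Fintype.piFinset (fun _ : Fin M => Finset.range k),
        B m (w + (∑ j, (p j : ℝ) * a j) / k) =
      (k : ℝ) ^ ((M : ℤ) - (m : ℤ)) * B m (k * w) := by
  have kpos : (0:ℝ) < (k:ℝ) := by exact_mod_cast hk
  have kne : (k:ℝ) ≠ 0 := ne_of_gt kpos
  set P : Finset (Fin M → ℕ) := Fintype.piFinset (fun _ : Fin M => Finset.range k) with hP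
  set X : (Fin M → ℕ) → ℝ := fun p => w + (∑ j, (p j : ℝ) * a j) / k with hX
  have hexpan : ∀ x : ℝ, AnalyticAt ℝ (fun t : ℝ => Real.exp (-(x * t))) 0 :=
    fun x => ((analyticAt_const.mul analyticAt_id).neg).rexp
  have hfp : ∀ p : Fin M → ℕ, AnalyticAt ℝ (fun t => g t * Real.exp (-(X p * t))) 0 :=
    fun p => hg.mul (hexpan _)
  set φ : ℝ → ℝ := fun s => g s * Real.exp (-(((k:ℝ) * w) * s)) with hφdef
  have hφ : AnalyticAt ℝ φ 0 := hg.mul (hexpan _)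
  set F : ℝ → ℝ := fun t => ∑ p ∈ P, g t * Real.exp (-(X p * t)) with hFdef
  set G : ℝ → ℝ := fun t => (k:ℝ) ^ M * φ ((k:ℝ)⁻¹ * t) with hGdef
  have hGan' : AnalyticAt ℝ (fun t => φ ((k:ℝ)⁻¹ * t)) 0 := by
    have hd : AnalyticAt ℝ φ ((fun t : ℝ => (k:ℝ)⁻¹ * t) 0) := by simpa using hφ
    simpa [Function.comp_def] using hd.comp (analyticAt_const.mul analyticAt_id)
  have hGan : AnalyticAt ℝ G 0 := analyticAt_const.mul hGan'
  have hFan : AnalyticAt ℝ F 0 := P.analyticAt_fun_sum (fun p _ => hfp p)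
  -- pulled-back form of hgeq
  have htend : Filter.Tendsto (fun t : ℝ => (k:ℝ)⁻¹ * t)
      (nhdsWithin 0 {(0:ℝ)}ᶜ) (nhdsWithin 0 {(0:ℝ)}ᶜ) := by
    rw [tendsto_nhdsWithin_iff]
    constructor
    · have h1 : Filter.Tendsto (fun t : ℝ => (k:ℝ)⁻¹ * t) (nhds 0) (nhds 0) := by
        have := (continuous_mul_left (k:ℝ)⁻¹).tendsto (0:ℝ); rwa [mul_zero] at this
      exact h1.mono_left nhdsWithin_le_nhds
    · filter_upwards [self_mem_nhdsWithin] with t ht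
      simp only [Set.mem_compl_iff, Set.mem_singleton_iff] at ht ⊢
      exact mul_ne_zero (inv_ne_zero kne) ht
  have hcomp_ev : (fun t => g ((k:ℝ)⁻¹ * t)) =ᶠ[nhdsWithin 0 {(0:ℝ)}ᶜ] fun t =>
      ((k:ℝ)⁻¹ * t) ^ M * ∏ j, (1 - Real.exp (-(a j * ((k:ℝ)⁻¹ * t))))⁻¹ := by
    have := hgeq.comp_tendsto htend
    simpa [Function.comp_def] using this
  -- key eventual equality on punctured neighborhood
  have key : F =ᶠ[nhdsWithin 0 {(0:ℝ)}ᶜ] G := by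
    filter_upwards [hgeq, hcomp_ev, self_mem_nhdsWithin] with t hgt hgct ht'
    have ht0 : t ≠ 0 := by simpa using ht'
    set E : Fin M → ℝ := fun j => Real.exp (-(a j * ((k:ℝ)⁻¹ * t))) with hE
    have hEk : ∀ j, Real.exp (-(a j * t)) = E j ^ k := by
      intro j
      rw [hE, ← Real.exp_nat_mul]
      congr 1
      field_simp
    have hE1 : ∀ j, E j ≠ 1 := by
      intro j
      simp only [hE, ne_eq, Real.exp_eq_one_iff, neg_eq_zero]
      exact mul_ne_zero (ha j).ne' (mul_ne_zero (inv_ne_zero kne) ht0)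
    have hEk1 : ∀ j, E j ^ k ≠ 1 := by
      intro j
      rw [← hEk j]
      simp only [ne_eq, Real.exp_eq_one_iff, neg_eq_zero]
      exact mul_ne_zero (ha j).ne' ht0
    have h1 : ∀ p : Fin M → ℕ,
        Real.exp (-(X p * t)) = Real.exp (-(w * t)) * ∏ j, E j ^ (p j) := by
      intro p
      have h2 : ∀ j : Fin M, E j ^ (p j) =
          Real.exp ((p j : ℝ) * (-(a j * ((k:ℝ)⁻¹ * t)))) :=
        fun j => (Real.exp_nat_mul _ _).symm
      rw [Finset.prod_congr rfl (fun j _ => h2 j), ← Real.exp_sum, ← Real.exp_add]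
      congr 1
      have h5 : ∑ j, (p j : ℝ) * (-(a j * ((k:ℝ)⁻¹ * t)))
          = (∑ j, (p j : ℝ) * a j) * (-((k:ℝ)⁻¹ * t)) := by
        rw [Finset.sum_mul]
        exact Finset.sum_congr rfl fun j _ => by ring
      rw [h5, hX]
      field_simp
      ring
    have hFt : F t = t ^ M * Real.exp (-(w * t)) * ∏ j, (1 - E j)⁻¹ := by
      have step1 : F t = g t * Real.exp (-(w * t)) * ∑ p ∈ P, ∏ j, E j ^ (p j) := by
        rw [hFdef]
        simp only [h1]
        rw [Finset.mul_sum]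
        exact Finset.sum_congr rfl fun p _ => by ring
      have step2 : ∑ p ∈ P, ∏ j, E j ^ (p j) = ∏ j, ((E j) ^ k - 1) / (E j - 1) := by
        rw [hP, ← Finset.prod_univ_sum]
        exact Finset.prod_congr rfl fun j _ => geom_sum_eq (hE1 j) k
      have hgt' : g t = t ^ M * ∏ j, (1 - E j ^ k)⁻¹ := by
        rw [hgt]
        congr 1
        exact Finset.prod_congr rfl fun j _ => by rw [hEk j]
      have hprod : (∏ j, (1 - E j ^ k)⁻¹) * ∏ j, ((E j) ^ k - 1) / (E j - 1)
          = ∏ j, (1 - E j)⁻¹ := by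
        rw [← Finset.prod_mul_distrib]
        refine Finset.prod_congr rfl fun j _ => ?_
        have d1 : (1 : ℝ) - E j ^ k ≠ 0 := sub_ne_zero_of_ne (Ne.symm (hEk1 j))
        have d2 : (1 : ℝ) - E j ≠ 0 := sub_ne_zero_of_ne (Ne.symm (hE1 j))
        have d3 : E j - 1 ≠ 0 := sub_ne_zero_of_ne (hE1 j)
        field_simp
        ring
      rw [step1, step2, hgt']
      calc t ^ M * (∏ j, (1 - E j ^ k)⁻¹) * Real.exp (-(w * t)) *
            ∏ j, ((E j) ^ k - 1) / (E j - 1)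
          = t ^ M * Real.exp (-(w * t)) *
            ((∏ j, (1 - E j ^ k)⁻¹) * ∏ j, ((E j) ^ k - 1) / (E j - 1)) := by ring
        _ = t ^ M * Real.exp (-(w * t)) * ∏ j, (1 - E j)⁻¹ := by rw [hprod]
    have hGt : G t = t ^ M * Real.exp (-(w * t)) * ∏ j, (1 - E j)⁻¹ := by
      have hwt : ((k:ℝ) * w) * ((k:ℝ)⁻¹ * t) = w * t := by
        field_simp
      have hkM : (k:ℝ) ^ M * ((k:ℝ)⁻¹ * t) ^ M = t ^ M := by
        rw [mul_pow, ← mul_assoc, ← mul_pow, mul_inv_cancel₀ kne, one_pow, one_mul]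
      rw [hGdef]
      show (k:ℝ) ^ M * (g ((k:ℝ)⁻¹ * t) * Real.exp (-(((k:ℝ) * w) * ((k:ℝ)⁻¹ * t))))
        = t ^ M * Real.exp (-(w * t)) * ∏ j, (1 - E j)⁻¹
      rw [hgct, hwt]
      calc (k:ℝ) ^ M * (((k:ℝ)⁻¹ * t) ^ M * (∏ j, (1 - E j)⁻¹) * Real.exp (-(w * t)))
          = ((k:ℝ) ^ M * ((k:ℝ)⁻¹ * t) ^ M) * Real.exp (-(w * t)) * ∏ j, (1 - E j)⁻¹ := by
            ring
        _ = t ^ M * Real.exp (-(w * t)) * ∏ j, (1 - E j)⁻¹ := by rw [hkM]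
    rw [hFt, hGt]
  -- upgrade to full neighborhood
  have hF0G0 : F 0 = G 0 := by
    have hFt : Filter.Tendsto F (nhdsWithin 0 {(0:ℝ)}ᶜ) (nhds (F 0)) :=
      (hFan.continuousAt.continuousWithinAt).tendsto
    have hGt : Filter.Tendsto G (nhdsWithin 0 {(0:ℝ)}ᶜ) (nhds (G 0)) :=
      (hGan.continuousAt.continuousWithinAt).tendsto
    exact tendsto_nhds_unique (hFt.congr' key) hGt
  have hFG : F =ᶠ[nhds (0:ℝ)] G := by
    have hsup : ∀ᶠ t in (nhdsWithin 0 {(0:ℝ)}ᶜ ⊔ pure 0), F t = G t := by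
      rw [Filter.eventually_sup]
      exact ⟨key, by simpa using hF0G0⟩
    have := nhdsNE_sup_pure (0:ℝ)
    rw [this] at hsup
    exact hsup
  -- conclude
  have lhs_eq : ∑ p ∈ P, B m (X p) = iteratedDeriv m F 0 := by
    have h6 := myIter_sum P m (fun p => fun t => g t * Real.exp (-(X p * t)))
      (fun p _ => hfp p)
    calc ∑ p ∈ P, B m (X p)
        = ∑ p ∈ P, iteratedDeriv m (fun t => g t * Real.exp (-(X p * t))) 0 :=
          Finset.sum_congr rfl fun p _ => hB m (X p)
      _ = iteratedDeriv m F 0 := h6.symm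
  have rhs_eq : iteratedDeriv m G 0 = (k : ℝ) ^ ((M : ℤ) - (m : ℤ)) * B m (k * w) := by
    rw [hGdef]
    rw [myIter_cmul ((k:ℝ) ^ M) m _ hGan']
    rw [myIter_scale ((k:ℝ)⁻¹) (inv_ne_zero kne) m φ hφ]
    rw [hB m ((k:ℝ) * w)]
    rw [zpow_sub₀ kne, zpow_natCast, zpow_natCast, div_eq_mul_inv, ← inv_pow]
    ring
  calc ∑ p ∈ P, B m (X p) = iteratedDeriv m F 0 := lhs_eq
    _ = iteratedDeriv m G 0 := hFG.iteratedDeriv_eq m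
    _ = (k : ℝ) ^ ((M : ℤ) - (m : ℤ)) * B m (k * w) := rhs_eq
end

section
/- Negative moments of the critical distribution: for the probability distribution $M_c$ whose Mellin transform is $\mathbf{E}[M_c^q] = \frac{G(4-2q)}{G(1-q)\,G^2(2-q)\,G(4-q)}$ ($G$ the Barnes G-function), the negative integer moments are given by the finite product $\mathbf{E}[M_c^{-l}] = \prod_{k=0}^{l-1} \frac{(3+l+k)!}{((k+1)!)^2\, k!}$ for every $l \in \mathbb{N}$. In particular, taking this as the definition, one must verify the Barnes G-function identity $\frac{G(4+2l)}{G(1+l)\, G^2(2+l)\, G(4+l)} = \prod_{k=0}^{l-1} \frac{(3+l+k)!}{((k+1)!)^2\, k!}$ for all $l \ge 0$. -/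
open Finset

lemma G_nat_eq (G : ℝ → ℝ) (hG1 : G 1 = 1)
    (hGrec : ∀ z : ℝ, 0 < z → G (z + 1) = Real.Gamma z * G z) (n : ℕ) :
    G (n + 1) = ∏ j ∈ Finset.range n, (Nat.factorial j : ℝ) := by
  induction n with
  | zero => simpa using hG1
  | succ n ih =>
      have h := hGrec (n + 1) (by positivity)
      push_cast
      rw [show ((n : ℝ) + 1 + 1) = ((n : ℝ) + 1) + 1 by ring, h,
        Real.Gamma_nat_eq_factorial, ih, Finset.prod_range_succ]
      ring

/-- Barnes G-function identity underlying the negative moments of the critical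
distribution `M_c`: for `G` with `G(1) = 1` and `G(z+1) = Γ(z)G(z)` for `z > 0`,
`G(4+2l)/(G(1+l) G(2+l)² G(4+l)) = ∏_{k=0}^{l-1} (3+l+k)!/((k+1)!² k!)`. -/
theorem critical_negative_moments (G : ℝ → ℝ) (hG1 : G 1 = 1)
    (hGrec : ∀ z : ℝ, 0 < z → G (z + 1) = Real.Gamma z * G z) (l : ℕ) :
    G (4 + 2 * l) / (G (1 + l) * G (2 + l) ^ 2 * G (4 + l)) =
      ∏ k ∈ Finset.range l,
        (Nat.factorial (3 + l + k) : ℝ) /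
          ((Nat.factorial (k + 1) : ℝ) ^ 2 * (Nat.factorial k : ℝ)) := by
  have e1 : G (4 + 2 * l) = ∏ j ∈ Finset.range (3 + 2 * l), (Nat.factorial j : ℝ) := by
    rw [← G_nat_eq G hG1 hGrec (3 + 2 * l)]; push_cast; ring_nf
  have e2 : G (1 + l) = ∏ j ∈ Finset.range l, (Nat.factorial j : ℝ) := by
    rw [← G_nat_eq G hG1 hGrec l]; ring_nf
  have e3 : G (2 + l) = ∏ j ∈ Finset.range (l + 1), (Nat.factorial j : ℝ) := by
    rw [← G_nat_eq G hG1 hGrec (l + 1)]; push_cast; ring_nf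
  have e4 : G (4 + l) = ∏ j ∈ Finset.range (3 + l), (Nat.factorial j : ℝ) := by
    rw [← G_nat_eq G hG1 hGrec (3 + l)]; push_cast; ring_nf
  rw [e1, e2, e3, e4]
  rw [show 3 + 2 * l = (3 + l) + l by ring, Finset.prod_range_add]
  rw [Finset.prod_range_succ']
  simp only [Nat.factorial_zero, Nat.cast_one, mul_one]
  rw [Finset.prod_div_distrib]
  rw [Finset.prod_mul_distrib, Finset.prod_pow]
  have hA : (∏ j ∈ Finset.range (3 + l), (Nat.factorial j : ℝ)) ≠ 0 :=
    Finset.prod_ne_zero_iff.2 fun j _ => by positivity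
  have hB : (∏ j ∈ Finset.range l, (Nat.factorial j : ℝ)) ≠ 0 :=
    Finset.prod_ne_zero_iff.2 fun j _ => by positivity
  have hC : (∏ j ∈ Finset.range l, (Nat.factorial (j + 1) : ℝ)) ≠ 0 :=
    Finset.prod_ne_zero_iff.2 fun j _ => by positivity
  field_simp
end
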